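/- arXiv:2004.09158 — 2 statements merged into one kernel-verified Lean document; each statement's English description precedes it below -/
import Mathlib

section
/- For a positive definite symmetric d×d real matrix D, among all real d×d matrices A with determinant 1, the minimum of trace(A D Aᵀ) equals d · (det D)^(1/d). -/
open Matrix Finset
open scoped MatrixOrder

lemma my_real_conjT {m n : Type*} (A : Matrix m n ℝ) : Aᴴ = Aᵀ :=
  conjTranspose_eq_transpose_of_trivial A

lemma my_trace_eq_sum_eigenvalues {n : Type*} [Fintype n] [DecidableEq n]
    {A : Matrix n n ℝ} (hA : A.IsHermitian) : A.trace = ∑ i, hA.eigenvalues i := by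
  conv_lhs => rw [hA.spectral_theorem]
  rw [Unitary.conjStarAlgAut_apply, Matrix.trace_mul_cycle, Unitary.coe_star_mul_self, Matrix.one_mul, Matrix.trace_diagonal]
  simp [RCLike.ofReal_real_eq_id]

lemma my_posDef_mul {d : ℕ} {A D : Matrix (Fin d) (Fin d) ℝ}
    (hD : D.PosDef) (hA : IsUnit A.det) : (A * D * Aᵀ).PosDef := by
  refine posDef_iff_dotProduct_mulVec.mpr ⟨?_, ?_⟩
  · have := isHermitian_mul_mul_conjTranspose A hD.1
    rwa [my_real_conjT] at this
  · intro x hx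
    have hAT : IsUnit Aᵀ.det := by rwa [det_transpose]
    have hy : Aᵀ *ᵥ x ≠ 0 := by
      intro h
      apply hx
      have := congrArg (fun v => (Aᵀ)⁻¹ *ᵥ v) h
      simpa [mulVec_mulVec, nonsing_inv_mul _ hAT] using this
    have key : dotProduct (star x) ((A * D * Aᵀ) *ᵥ x)
        = dotProduct (star (Aᵀ *ᵥ x)) (D *ᵥ (Aᵀ *ᵥ x)) := by
      simp only [star_trivial]
      have h1 : (A * D * Aᵀ) *ᵥ x = A *ᵥ (D *ᵥ (Aᵀ *ᵥ x)) := by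
        simp [mulVec_mulVec, Matrix.mul_assoc]
      rw [h1, dotProduct_mulVec, mulVec_transpose]
    rw [key]
    exact hD.dotProduct_mulVec_pos hy

theorem stmt0 (d : ℕ) (hd : 1 ≤ d) (D : Matrix (Fin d) (Fin d) ℝ) (hD : D.PosDef) :
    IsLeast {t : ℝ | ∃ A : Matrix (Fin d) (Fin d) ℝ, A.det = 1 ∧ t = (A * D * Aᵀ).trace}
      ((d : ℝ) * D.det ^ ((1 : ℝ) / d)) := by
  have hdR : (d : ℝ) ≠ 0 := Nat.cast_ne_zero.mpr (by omega)
  have hDdet : (0 : ℝ) < D.det := hD.det_pos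
  constructor
  · -- membership: construct the minimizer
    set S := CFC.sqrt D with hSdef
    have hS : S.PosSemidef := (CFC.sqrt_nonneg D).posSemidef
    have hSS : S * S = D := CFC.sqrt_mul_sqrt_self D hD.posSemidef.nonneg
    have hSymm : Sᵀ = S := by rw [← my_real_conjT]; exact hS.1
    have hdetS2 : S.det * S.det = D.det := by rw [← det_mul, hSS]
    have hdetSnn : 0 ≤ S.det := by
      rw [hS.1.det_eq_prod_eigenvalues]
      exact Finset.prod_nonneg fun i _ => by
        simpa [RCLike.ofReal_real_eq_id] using hS.eigenvalues_nonneg i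
    have hdetS : S.det = D.det ^ ((1 : ℝ) / 2) := by
      rw [← Real.sqrt_eq_rpow, ← hdetS2, Real.sqrt_mul_self hdetSnn]
    have hdetSpos : 0 < S.det := by
      rw [hdetS]; exact Real.rpow_pos_of_pos hDdet _
    have hSunit : IsUnit S.det := hdetSpos.ne'.isUnit
    set a : ℝ := D.det ^ ((1 : ℝ) / (2 * d)) with ha
    have hapos : 0 < a := Real.rpow_pos_of_pos hDdet _
    refine ⟨a • S⁻¹, ?_, ?_⟩
    · have had : a ^ d = D.det ^ ((1 : ℝ) / 2) := by
        rw [ha, ← Real.rpow_natCast (D.det ^ ((1 : ℝ) / (2 * d))) d,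
          ← Real.rpow_mul hDdet.le]
        congr 1
        field_simp
      rw [det_smul, Fintype.card_fin, det_nonsing_inv, Ring.inverse_eq_inv', had, ← hdetS]
      exact mul_inv_cancel₀ hdetSpos.ne'
    · have hT : (a • S⁻¹)ᵀ = a • S⁻¹ := by
        rw [transpose_smul, transpose_nonsing_inv, hSymm]
      have hmid : S⁻¹ * D * S⁻¹ = 1 := by
        rw [← hSS, ← Matrix.mul_assoc, nonsing_inv_mul _ hSunit,
          Matrix.one_mul, mul_nonsing_inv _ hSunit]
      have hcalc : (a • S⁻¹) * D * (a • S⁻¹)ᵀ = (a * a) • (1 : Matrix (Fin d) (Fin d) ℝ) := by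
        rw [hT, Matrix.smul_mul, Matrix.smul_mul, Matrix.mul_smul, hmid, smul_smul]
      rw [hcalc, trace_smul, trace_one, Fintype.card_fin, smul_eq_mul]
      have hexp : (1 : ℝ) / (2 * d) + 1 / (2 * d) = 1 / d := by
        rw [← add_div, div_eq_div_iff (by positivity) (by positivity)]
        ring
      have haa : a * a = D.det ^ ((1 : ℝ) / d) := by
        rw [ha, ← Real.rpow_add hDdet, hexp]
      rw [haa]; ring
  · -- lower bound
    rintro t ⟨A, hA1, rfl⟩
    have hM : (A * D * Aᵀ).PosDef := my_posDef_mul hD (hA1 ▸ isUnit_one)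
    set lam := hM.1.eigenvalues with hlam
    have hpos : ∀ i, 0 < lam i := fun i => hM.eigenvalues_pos i
    have htr : (A * D * Aᵀ).trace = ∑ i, lam i := my_trace_eq_sum_eigenvalues hM.1
    have hdet : D.det = ∏ i, lam i := by
      have h1 : (A * D * Aᵀ).det = ∏ i, lam i := by
        have := hM.1.det_eq_prod_eigenvalues
        simpa using this
      rw [← h1, det_mul, det_mul, det_transpose, hA1]
      ring
    have hsum : ∑ i : Fin d, (1 : ℝ) / d = 1 := by
      simp [Finset.sum_const, Fintype.card_fin]
      field_simp
    have hgm : ∏ i, (lam i) ^ ((1 : ℝ) / d) ≤ ∑ i, ((1 : ℝ) / d) * lam i :=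
      Real.geom_mean_le_arith_mean_weighted Finset.univ (fun _ => (1 : ℝ) / d) lam
        (fun i _ => by positivity) hsum (fun i _ => (hpos i).le)
    have hprod : D.det ^ ((1 : ℝ) / d) = ∏ i, (lam i) ^ ((1 : ℝ) / d) := by
      rw [hdet, Real.finset_prod_rpow Finset.univ lam (fun i _ => (hpos i).le)]
    rw [htr, hprod]
    calc (d : ℝ) * ∏ i, (lam i) ^ ((1 : ℝ) / d)
        ≤ (d : ℝ) * ∑ i, ((1 : ℝ) / d) * lam i := by
          exact mul_le_mul_of_nonneg_left hgm (Nat.cast_nonneg d)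
      _ = ∑ i, lam i := by
          rw [Finset.mul_sum]
          congr 1; ext i; field_simp
end

section
/- Let g : ℕ → ℝ≥0 with g(0)=0, g(k)>0 for k>0, sup_k |g(k+1)−g(k)| = g* < ∞, and suppose Z(φ) = ∑_k φ^k/g(k)! < ∞ for all φ ≥ 0. Define R(φ) := E_{ν̄_φ}[η] = (1/Z(φ)) ∑_k k φ^k/g(k)!. Then the inverse function Ψ of R is uniformly Lipschitz on ℝ₊ with Lipschitz constant g*. -/
private lemma pow_cross (φ ψ : ℝ) (hψ : 0 ≤ ψ) (h : ψ ≤ φ) {n m : ℕ} (hnm : n ≤ m) :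
    ψ ^ m * φ ^ n ≤ φ ^ m * ψ ^ n := by
  obtain ⟨d, rfl⟩ := Nat.exists_eq_add_of_le hnm
  rw [pow_add, pow_add]
  have h1 : ψ ^ d ≤ φ ^ d := pow_le_pow_left₀ hψ h d
  have h2 : (0:ℝ) ≤ φ ^ n := pow_nonneg (hψ.trans h) n
  have h3 : (0:ℝ) ≤ ψ ^ n := pow_nonneg hψ n
  have := mul_le_mul_of_nonneg_left h1 (mul_nonneg h3 h2)
  nlinarith [this]

set_option maxHeartbeats 1600000 in
/-- Key stochastic-domination lemma: for a nonnegative monotone `f` and `0 ≤ ψ ≤ φ`,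
`E_ψ[f] * Z_φ ≤ E_φ[f] * Z_ψ` (in unnormalized form). -/
private lemma key (c : ℕ → ℝ) (hc : ∀ k, 0 ≤ c k) (f : ℕ → ℝ) (hf0 : ∀ k, 0 ≤ f k)
    (hmono : Monotone f) (φ ψ : ℝ) (hψ : 0 ≤ ψ) (hφψ : ψ ≤ φ)
    (hA : Summable (fun k => f k * φ ^ k * c k)) (hA' : Summable (fun k => f k * ψ ^ k * c k))
    (hB : Summable (fun k => φ ^ k * c k)) (hB' : Summable (fun k => ψ ^ k * c k)) :
    (∑' k : ℕ, f k * ψ ^ k * c k) * (∑' j : ℕ, φ ^ j * c j)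
      ≤ (∑' k : ℕ, f k * φ ^ k * c k) * (∑' j : ℕ, ψ ^ j * c j) := by
  have hφ : 0 ≤ φ := hψ.trans hφψ
  have hAnn : ∀ k, 0 ≤ f k * φ ^ k * c k := fun k =>
    mul_nonneg (mul_nonneg (hf0 k) (pow_nonneg hφ k)) (hc k)
  have hA'nn : ∀ k, 0 ≤ f k * ψ ^ k * c k := fun k =>
    mul_nonneg (mul_nonneg (hf0 k) (pow_nonneg hψ k)) (hc k)
  have hBnn : ∀ k, 0 ≤ φ ^ k * c k := fun k => mul_nonneg (pow_nonneg hφ k) (hc k)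
  have hB'nn : ∀ k, 0 ≤ ψ ^ k * c k := fun k => mul_nonneg (pow_nonneg hψ k) (hc k)
  -- double sums
  have hQ : Summable (fun p : ℕ × ℕ => (f p.1 * ψ ^ p.1 * c p.1) * (φ ^ p.2 * c p.2)) :=
    hA'.mul_of_nonneg hB hA'nn hBnn
  have hP : Summable (fun p : ℕ × ℕ => (f p.1 * φ ^ p.1 * c p.1) * (ψ ^ p.2 * c p.2)) :=
    hA.mul_of_nonneg hB' hAnn hB'nn
  rw [Summable.tsum_mul_tsum hA' hB hQ, Summable.tsum_mul_tsum hA hB' hP]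
  -- swapped versions
  have hPsw : Summable (fun p : ℕ × ℕ => (f p.2 * φ ^ p.2 * c p.2) * (ψ ^ p.1 * c p.1)) := by
    have := (Equiv.prodComm ℕ ℕ).summable_iff.mpr hP
    simpa [Function.comp_def] using this
  have hQsw : Summable (fun p : ℕ × ℕ => (f p.2 * ψ ^ p.2 * c p.2) * (φ ^ p.1 * c p.1)) := by
    have := (Equiv.prodComm ℕ ℕ).summable_iff.mpr hQ
    simpa [Function.comp_def] using this
  have ePsw : (∑' p : ℕ × ℕ, (f p.2 * φ ^ p.2 * c p.2) * (ψ ^ p.1 * c p.1))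
      = ∑' p : ℕ × ℕ, (f p.1 * φ ^ p.1 * c p.1) * (ψ ^ p.2 * c p.2) := by
    have := (Equiv.prodComm ℕ ℕ).tsum_eq
      (fun p : ℕ × ℕ => (f p.1 * φ ^ p.1 * c p.1) * (ψ ^ p.2 * c p.2))
    simpa using this
  have eQsw : (∑' p : ℕ × ℕ, (f p.2 * ψ ^ p.2 * c p.2) * (φ ^ p.1 * c p.1))
      = ∑' p : ℕ × ℕ, (f p.1 * ψ ^ p.1 * c p.1) * (φ ^ p.2 * c p.2) := by
    have := (Equiv.prodComm ℕ ℕ).tsum_eq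
      (fun p : ℕ × ℕ => (f p.1 * ψ ^ p.1 * c p.1) * (φ ^ p.2 * c p.2))
    simpa using this
  have hpt : ∀ p : ℕ × ℕ,
      (f p.1 * ψ ^ p.1 * c p.1) * (φ ^ p.2 * c p.2) + (f p.2 * ψ ^ p.2 * c p.2) * (φ ^ p.1 * c p.1)
      ≤ (f p.1 * φ ^ p.1 * c p.1) * (ψ ^ p.2 * c p.2)
        + (f p.2 * φ ^ p.2 * c p.2) * (ψ ^ p.1 * c p.1) := by
    intro ⟨k, j⟩
    have key : 0 ≤ (f k - f j) * (φ ^ k * ψ ^ j - ψ ^ k * φ ^ j) * (c k * c j) := by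
      apply mul_nonneg _ (mul_nonneg (hc k) (hc j))
      rcases le_total j k with hjk | hjk
      · exact mul_nonneg (sub_nonneg.2 (hmono hjk))
          (sub_nonneg.2 (pow_cross φ ψ hψ hφψ hjk))
      · have h1 : f k - f j ≤ 0 := sub_nonpos.2 (hmono hjk)
        have h2 : φ ^ k * ψ ^ j - ψ ^ k * φ ^ j ≤ 0 := by
          have := pow_cross φ ψ hψ hφψ hjk
          linarith
        nlinarith [h1, h2]
    simp only
    have expand : (f k * φ ^ k * c k) * (ψ ^ j * c j) + (f j * φ ^ j * c j) * (ψ ^ k * c k)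
        - ((f k * ψ ^ k * c k) * (φ ^ j * c j) + (f j * ψ ^ j * c j) * (φ ^ k * c k))
        = (f k - f j) * (φ ^ k * ψ ^ j - ψ ^ k * φ ^ j) * (c k * c j) := by ring
    linarith [key, expand]
  have h2 : (∑' p : ℕ × ℕ, ((f p.1 * ψ ^ p.1 * c p.1) * (φ ^ p.2 * c p.2)
        + (f p.2 * ψ ^ p.2 * c p.2) * (φ ^ p.1 * c p.1)))
      ≤ (∑' p : ℕ × ℕ, ((f p.1 * φ ^ p.1 * c p.1) * (ψ ^ p.2 * c p.2)
        + (f p.2 * φ ^ p.2 * c p.2) * (ψ ^ p.1 * c p.1))) :=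
    Summable.tsum_le_tsum hpt (hQ.add hQsw) (hP.add hPsw)
  rw [Summable.tsum_add hQ hQsw, Summable.tsum_add hP hPsw, ePsw, eQsw] at h2
  linarith

theorem stmt7 (g : ℕ → ℝ) (h0 : g 0 = 0) (hg : ∀ k, 0 ≤ g k) (hpos : ∀ k, 0 < k → 0 < g k)
    (gstar : ℝ) (hgs : ∀ k, |g (k + 1) - g k| ≤ gstar)
    (gfact : ℕ → ℝ) (hgfact : ∀ k, gfact k = ∏ i ∈ Finset.range k, g (i + 1))
    (hZ : ∀ φ : ℝ, 0 ≤ φ → Summable (fun k : ℕ => φ ^ k / gfact k))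
    (R : ℝ → ℝ)
    (hR : ∀ φ : ℝ, 0 ≤ φ →
      R φ = (∑' k : ℕ, (k : ℝ) * φ ^ k / gfact k) / (∑' k : ℕ, φ ^ k / gfact k))
    (Ψ : ℝ → ℝ) (hΨpos : ∀ α, 0 ≤ α → 0 ≤ Ψ α)
    (hΨR : ∀ φ, 0 ≤ φ → Ψ (R φ) = φ) (hRΨ : ∀ α, 0 ≤ α → R (Ψ α) = α) :
    ∀ α β : ℝ, 0 ≤ α → 0 ≤ β → |Ψ α - Ψ β| ≤ gstar * |α - β| := by
  -- basic facts
  have hgs0 : 0 ≤ gstar := le_trans (abs_nonneg _) (hgs 0)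
  have hgfpos : ∀ k, 0 < gfact k := by
    intro k
    rw [hgfact k]
    exact Finset.prod_pos fun i _ => hpos (i + 1) (Nat.succ_pos i)
  have hglin : ∀ k, g k ≤ gstar * k := by
    intro k
    induction k with
    | zero => simp [h0]
    | succ n ih =>
      have := (abs_le.1 (hgs n)).2
      push_cast
      nlinarith
  set c : ℕ → ℝ := fun k => 1 / gfact k with hc
  have hcpos : ∀ k, 0 < c k := fun k => one_div_pos.mpr (hgfpos k)
  have hcnn : ∀ k, 0 ≤ c k := fun k => (hcpos k).le
  have hZ' : ∀ x : ℝ, 0 ≤ x → Summable (fun k : ℕ => x ^ k * c k) := by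
    intro x hx
    have := hZ x hx
    simpa [hc, div_eq_mul_inv, one_div] using this
  -- summability of k * x^k * c k
  have hN : ∀ x : ℝ, 0 ≤ x → Summable (fun k : ℕ => (k : ℝ) * x ^ k * c k) := by
    intro x hx
    refine Summable.of_nonneg_of_le
      (fun k => mul_nonneg (mul_nonneg (Nat.cast_nonneg k) (pow_nonneg hx k)) (hcnn k))
      ?_ (hZ' (2 * x) (by linarith))
    · intro k
      have hk : (k : ℝ) ≤ 2 ^ k := by
        exact_mod_cast Nat.le_of_lt (Nat.lt_two_pow_self (n := k))
      have : (k : ℝ) * x ^ k ≤ 2 ^ k * x ^ k :=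
        mul_le_mul_of_nonneg_right hk (pow_nonneg hx k)
      calc (k : ℝ) * x ^ k * c k ≤ 2 ^ k * x ^ k * c k :=
            mul_le_mul_of_nonneg_right this (hcnn k)
        _ = (2 * x) ^ k * c k := by rw [mul_pow]
  -- gfact recursion
  have hgf_succ : ∀ k, gfact (k + 1) = gfact k * g (k + 1) := by
    intro k
    rw [hgfact, hgfact, Finset.prod_range_succ]
  -- the identity: sum of g k * x^k * c k = x * Z x
  have hgid : ∀ x : ℝ, 0 ≤ x →
      (∑' k : ℕ, g k * x ^ k * c k) = x * ∑' k : ℕ, x ^ k * c k := by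
    intro x hx
    have hsumm : Summable (fun k : ℕ => g k * x ^ k * c k) := by
      refine Summable.of_nonneg_of_le
        (fun k => mul_nonneg (mul_nonneg (hg k) (pow_nonneg hx k)) (hcnn k))
        ?_ ((hN x hx).mul_left gstar)
      · intro k
        have h1 : g k * x ^ k * c k ≤ gstar * k * x ^ k * c k :=
          mul_le_mul_of_nonneg_right
            (mul_le_mul_of_nonneg_right (hglin k) (pow_nonneg hx k)) (hcnn k)
        calc g k * x ^ k * c k ≤ gstar * k * x ^ k * c k := h1
          _ = gstar * ((k : ℝ) * x ^ k * c k) := by ring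
    rw [Summable.tsum_eq_zero_add hsumm]
    have hterm : ∀ k : ℕ, g (k + 1) * x ^ (k + 1) * c (k + 1) = x * (x ^ k * c k) := by
      intro k
      have hgk : g (k + 1) ≠ 0 := ne_of_gt (hpos (k + 1) (Nat.succ_pos k))
      have : c (k + 1) = c k / g (k + 1) := by
        rw [hc]
        simp only
        rw [hgf_succ k]
        field_simp
      rw [this, pow_succ]
      field_simp
    simp only [h0, zero_mul, zero_add, hterm]
    rw [tsum_mul_left]
  -- R as ratio with our notation
  have hRval : ∀ x : ℝ, 0 ≤ x →
      R x = (∑' k : ℕ, (k : ℝ) * x ^ k * c k) / (∑' k : ℕ, x ^ k * c k) := by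
    intro x hx
    rw [hR x hx]
    congr 1 <;> apply tsum_congr <;> intro k <;> simp [hc, div_eq_mul_inv, mul_assoc]
  -- Z x ≥ 1
  have hZpos : ∀ x : ℝ, 0 ≤ x → 0 < ∑' k : ℕ, x ^ k * c k := by
    intro x hx
    have h1 : (1 : ℝ) ≤ ∑' k : ℕ, x ^ k * c k := by
      have h00 : x ^ 0 * c 0 = 1 := by
        simp [hc, hgfact 0]
      calc (1 : ℝ) = x ^ 0 * c 0 := h00.symm
        _ ≤ ∑' k : ℕ, x ^ k * c k :=
          Summable.le_tsum (hZ' x hx) 0 (fun k _ => mul_nonneg (pow_nonneg hx k) (hcnn k))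
    linarith
  -- main two claims for 0 ≤ ψ ≤ φ
  have hmain : ∀ φ ψ : ℝ, 0 ≤ ψ → ψ ≤ φ →
      R ψ ≤ R φ ∧ φ - ψ ≤ gstar * (R φ - R ψ) := by
    intro φ ψ hψ hφψ
    have hφ : 0 ≤ φ := hψ.trans hφψ
    set Zφ := ∑' k : ℕ, φ ^ k * c k with hZφ
    set Zψ := ∑' k : ℕ, ψ ^ k * c k with hZψ
    set Nφ := ∑' k : ℕ, (k : ℝ) * φ ^ k * c k with hNφ
    set Nψ := ∑' k : ℕ, (k : ℝ) * ψ ^ k * c k with hNψ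
    have hZφp := hZpos φ hφ
    have hZψp := hZpos ψ hψ
    have hRφ : R φ = Nφ / Zφ := hRval φ hφ
    have hRψ' : R ψ = Nψ / Zψ := hRval ψ hψ
    -- monotonicity : apply key with f = cast
    have hmono1 : Nψ * Zφ ≤ Nφ * Zψ := by
      exact key c hcnn (fun k => (k : ℝ)) (fun k => Nat.cast_nonneg k)
        (fun a b hab => Nat.cast_le.2 hab) φ ψ hψ hφψ
        (hN φ hφ) (hN ψ hψ) (hZ' φ hφ) (hZ' ψ hψ)
    have hRmono : R ψ ≤ R φ := by
      rw [hRφ, hRψ', div_le_div_iff₀ hZψp hZφp]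
      linarith
    refine ⟨hRmono, ?_⟩
    -- Lipschitz: apply key with f k = gstar * k - g k
    set f : ℕ → ℝ := fun k => gstar * k - g k with hf
    have hf0 : ∀ k, 0 ≤ f k := fun k => sub_nonneg.2 (hglin k)
    have hfmono : Monotone f := by
      apply monotone_nat_of_le_succ
      intro n
      have := (abs_le.1 (hgs n)).2
      simp only [hf]
      push_cast
      nlinarith
    have hsf : ∀ x : ℝ, 0 ≤ x → Summable (fun k : ℕ => f k * x ^ k * c k) := by
      intro x hx
      have : (fun k : ℕ => f k * x ^ k * c k)
          = fun k : ℕ => gstar * ((k:ℝ) * x ^ k * c k) - g k * x ^ k * c k := by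
        funext k; simp only [hf]; ring
      rw [this]
      apply Summable.sub ((hN x hx).mul_left gstar)
      · -- summable g k * x^k * c k : same as inside hgid; redo comparison
        refine Summable.of_nonneg_of_le
          (fun k => mul_nonneg (mul_nonneg (hg k) (pow_nonneg hx k)) (hcnn k))
          ?_ ((hN x hx).mul_left gstar)
        · intro k
          have h1 : g k * x ^ k * c k ≤ gstar * k * x ^ k * c k :=
            mul_le_mul_of_nonneg_right
              (mul_le_mul_of_nonneg_right (hglin k) (pow_nonneg hx k)) (hcnn k)
          calc g k * x ^ k * c k ≤ gstar * k * x ^ k * c k := h1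
            _ = gstar * ((k : ℝ) * x ^ k * c k) := by ring
    have hkey := key c hcnn f hf0 hfmono φ ψ hψ hφψ
      (hsf φ hφ) (hsf ψ hψ) (hZ' φ hφ) (hZ' ψ hψ)
    -- compute ∑ f k x^k c k = gstar * N x - x * Z x
    have hfval : ∀ x : ℝ, 0 ≤ x →
        (∑' k : ℕ, f k * x ^ k * c k)
          = gstar * (∑' k : ℕ, (k:ℝ) * x ^ k * c k) - x * ∑' k : ℕ, x ^ k * c k := by
      intro x hx
      have : (fun k : ℕ => f k * x ^ k * c k)
          = fun k : ℕ => gstar * ((k:ℝ) * x ^ k * c k) - g k * x ^ k * c k := by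
        funext k; simp only [hf]; ring
      rw [this, Summable.tsum_sub ((hN x hx).mul_left gstar) (by
        -- summable g k x^k c k again
        refine Summable.of_nonneg_of_le
          (fun k => mul_nonneg (mul_nonneg (hg k) (pow_nonneg hx k)) (hcnn k))
          ?_ ((hN x hx).mul_left gstar)
        · intro k
          have h1 : g k * x ^ k * c k ≤ gstar * k * x ^ k * c k :=
            mul_le_mul_of_nonneg_right
              (mul_le_mul_of_nonneg_right (hglin k) (pow_nonneg hx k)) (hcnn k)
          calc g k * x ^ k * c k ≤ gstar * k * x ^ k * c k := h1
            _ = gstar * ((k : ℝ) * x ^ k * c k) := by ring), tsum_mul_left, hgid x hx]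
    rw [hfval φ hφ, hfval ψ hψ] at hkey
    -- hkey : (gstar * Nψ - ψ * Zψ) * Zφ ≤ (gstar * Nφ - φ * Zφ) * Zψ
    have hineq : (φ - ψ) * (Zφ * Zψ) ≤ gstar * (Nφ * Zψ - Nψ * Zφ) := by nlinarith [hkey]
    have hdiff : Nφ / Zφ - Nψ / Zψ = (Nφ * Zψ - Nψ * Zφ) / (Zφ * Zψ) := by
      rw [div_sub_div _ _ (show Zφ ≠ 0 from hZφp.ne') (show Zψ ≠ 0 from hZψp.ne')]
      ring
    rw [hRφ, hRψ', hdiff, ← mul_div_assoc, le_div_iff₀ (mul_pos hZφp hZψp)]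
    linarith [hineq]
  -- conclude
  intro α β hα hβ
  rcases le_total (Ψ β) (Ψ α) with h | h
  · obtain ⟨hm, hl⟩ := hmain (Ψ α) (Ψ β) (hΨpos β hβ) h
    rw [hRΨ α hα, hRΨ β hβ] at hm hl
    rw [abs_of_nonneg (sub_nonneg.2 h), abs_of_nonneg (sub_nonneg.2 hm)]
    exact hl
  · obtain ⟨hm, hl⟩ := hmain (Ψ β) (Ψ α) (hΨpos α hα) h
    rw [hRΨ α hα, hRΨ β hβ] at hm hl
    rw [abs_of_nonpos (sub_nonpos.2 h), abs_of_nonpos (sub_nonpos.2 hm)]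
    linarith
end
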